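/- Let κ be a cardinal with uncountable cofinality, meaning that a set of cardinality κ cannot be covered by countably many sets each of cardinality strictly less than κ. Let ι be an index type and let (P i)_{i ∈ ι} be a family of partial orders, each satisfying the σ^κ-chain condition. Suppose that for every sequence X₁, X₂, … of pairwise disjoint nonempty sets (subsets of an arbitrary ambient type) with |Xₙ| < κ for all n, there exist an index i and an injection f : ⋃ₙ Xₙ → P i whose range is an antichain in P i. Then the following are equivalent: (a) for every i, every antichain in P i has cardinality strictly less than κ; (b) for every sequence X₁, X₂, … of sets with |Xₙ| < κ for all n, the union ⋃ₙ Xₙ has cardinality strictly less than κ. -/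

import Mathlib

open Cardinal Set

universe u

/-- Two elements of a partial order are incompatible if every common lower bound of
them is a lower bound of all of `P`. -/
def Incompat {P : Type u} [PartialOrder P] (x y : P) : Prop :=
  ∀ z : P, z ≤ x → z ≤ y → ∀ w : P, z ≤ w

/-- An antichain is a set of pairwise incompatible elements. -/
def IsPosetAntichain {P : Type u} [PartialOrder P] (A : Set P) : Prop :=
  A.Pairwise Incompat

/-- A poset satisfies the `σ^κ`-chain condition if it is a countable union of subsets
in which every antichain has cardinality `< κ`. -/
def SigmaKappaCC (κ : Cardinal.{u}) (P : Type u) [PartialOrder P] : Prop :=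
  ∃ Q : ℕ → Set P, (⋃ n, Q n) = Set.univ ∧
    ∀ n, ∀ A : Set P, A ⊆ Q n → IsPosetAntichain A → #A < κ

/-- Theorem 3.3 (z1), second part: if moreover `κ` has uncountable cofinality (a set of
cardinality `κ` cannot be covered by countably many sets of cardinality `< κ`), then every
poset in the family is `κ`-cc iff countable unions of sets of size `< κ` have size `< κ`. -/
theorem sigmaKappaCC_antichain_lt_iff_countable_union_lt (κ : Cardinal.{u})
    (hcof : ∀ (β : Type u) (S : Set β) (C : ℕ → Set β),
      #S = κ → (∀ n, #(C n) < κ) → ¬ S ⊆ ⋃ n, C n)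
    (ι : Type u) (P : ι → Type u) [∀ i, PartialOrder (P i)]
    (hcc : ∀ i, SigmaKappaCC κ (P i))
    (hF : ∀ (α : Type u) (X : ℕ → Set α),
      Pairwise (Function.onFun Disjoint X) → (∀ n, (X n).Nonempty) →
      (∀ n, #(X n) < κ) →
      ∃ (i : ι) (f : (⋃ n, X n) → P i),
        Function.Injective f ∧ IsPosetAntichain (Set.range f)) :
    (∀ (i : ι) (A : Set (P i)), IsPosetAntichain A → #A < κ) ↔
    (∀ (α : Type u) (X : ℕ → Set α), (∀ n, #(X n) < κ) → #(⋃ n, X n) < κ) := by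
  -- first: κ is either ≤ 1 or uncountable
  have hbig : κ ≤ 1 ∨ ℵ₀ < κ := by
    by_contra h
    push_neg at h
    obtain ⟨h1, h2⟩ := h
    -- 1 < κ ≤ ℵ₀ : cover a set of size κ by singletons
    have hne : Nonempty κ.out := by
      rw [← Cardinal.mk_ne_zero_iff, Cardinal.mk_out]
      intro h0
      rw [h0] at h1
      exact absurd h1 (by simp)
    have hcnt : Countable κ.out := by
      rw [← Cardinal.mk_le_aleph0_iff, Cardinal.mk_out]
      exact h2
    obtain ⟨g, hg⟩ := exists_surjective_nat κ.out
    exact hcof κ.out Set.univ (fun n => {g n})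
      (by rw [Cardinal.mk_univ, Cardinal.mk_out])
      (fun n => by simpa using h1)
      (fun x _ => Set.mem_iUnion.mpr (by obtain ⟨n, hn⟩ := hg x; exact ⟨n, by simp [hn]⟩))
  constructor
  · intro hA α X hX
    rcases hbig with hle | hgt
    · -- all X n are empty
      have hXe : ∀ n, X n = ∅ := by
        intro n
        have := lt_of_lt_of_le (hX n) hle
        rwa [Cardinal.lt_one_iff_zero, Cardinal.mk_eq_zero_iff, Set.isEmpty_coe_sort] at this
      have : (⋃ n, X n) = ∅ := by simp [hXe]
      rw [this]
      simp only [Cardinal.mk_emptyCollection]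
      calc (0 : Cardinal) ≤ #(X 0) := zero_le
        _ < κ := hX 0
    · -- κ uncountable
      set Z : ℕ → Set (Option α × ℕ) :=
        fun n => ((fun a => ((some a : Option α), n)) '' X n) ∪ {((none : Option α), n)} with hZ
    -- properties of Z
      have hsnd : ∀ n p, p ∈ Z n → p.2 = n := by
        rintro n p (⟨a, _, rfl⟩ | hp)
        · rfl
        · rw [Set.mem_singleton_iff.mp hp]
      have hdisj : Pairwise (Function.onFun Disjoint Z) := by
        intro m n hmn
        rw [Function.onFun, Set.disjoint_left]
        intro p hm hn
        exact hmn ((hsnd m p hm).symm.trans (hsnd n p hn))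
      have hne : ∀ n, (Z n).Nonempty := fun n => ⟨(none, n), Or.inr rfl⟩
      have hZcard : ∀ n, #(Z n) < κ := by
        intro n
        calc #(Z n) ≤ #(((fun a => ((some a : Option α), n)) '' X n) : Set _)
              + #({((none : Option α), n)} : Set _) := Cardinal.mk_union_le _ _
          _ ≤ #(X n) + 1 := by
              gcongr
              · exact Cardinal.mk_image_le
              · simp
          _ < κ := Cardinal.add_lt_of_lt hgt.le (hX n) (lt_trans Cardinal.one_lt_aleph0 hgt)
      obtain ⟨i, f, hfinj, hfanti⟩ := hF (Option α × ℕ) Z hdisj hne hZcard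
      have hrange : #(Set.range f) < κ := hA i _ hfanti
      have hunionZ : #(⋃ n, Z n) < κ := by
        rwa [← Cardinal.mk_range_eq f hfinj]
      refine lt_of_le_of_lt ?_ hunionZ
      -- inject ⋃ X n into ⋃ Z n
      have hg : ∀ x : (⋃ n, X n), ∃ n, (x : α) ∈ X n := fun x => Set.mem_iUnion.mp x.2
      refine Cardinal.mk_le_of_injective (f := fun x =>
        (⟨((some (x : α) : Option α), (hg x).choose),
          Set.mem_iUnion.mpr ⟨(hg x).choose, Or.inl ⟨x, (hg x).choose_spec, rfl⟩⟩⟩ :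
          (⋃ n, Z n))) ?_
      intro x y hxy
      have : (some (x : α) : Option α) = some (y : α) := congrArg (fun z => (z : Option α × ℕ).1)
        (congrArg Subtype.val hxy)
      exact Subtype.ext (Option.some_injective α this)
  · intro hU i A hA
    obtain ⟨Q, hQu, hQ⟩ := hcc i
    have hcard : ∀ n, #(A ∩ Q n : Set (P i)) < κ := fun n =>
      hQ n _ (Set.inter_subset_right) (hA.mono Set.inter_subset_left)
    have hsub : A = ⋃ n, A ∩ Q n := by
      rw [← Set.inter_iUnion, hQu, Set.inter_univ]
    rw [hsub]
    exact hU (P i) (fun n => A ∩ Q n) hcard
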